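/- Suppose γ_{d,0} = 0, τ_{1,1} = τ_{2,1} = 0, A_2 > A_1, and γ_{1,0}τ_{2,0}w_{2,0} − (1−γ_{1,0})τ_{1,0}w_{1,0} < 0 (the high-saving agent 1 is taxed too heavily). Then, holding all other parameters fixed (with β_1 ∈ (0,1) fixed), there exists β̄ ∈ (0,1) such that for every β_2 ∈ (0, β̄), the intervention is harmful: Y_1 − Y_1* < 0. -/
import Mathlib


open Set

/-- Date-0 government revenue `T0 = τ10·w1 + τ20·w2`. -/
noncomputable def T0 (w1 w2 τ10 τ20 : ℝ) : ℝ := τ10 * w1 + τ20 * w2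

/-- Closed-form equilibrium date-1 GDP with intervention in the two-agent
log-linear economy when `γd = 0` and there are no date-1 taxes
(`τ11 = τ21 = 0`); the formula is valid when `A2 > A1`. -/
noncomputable def Y1NoTax (w1 w2 β1 β2 τ10 τ20 γ10 γ20 A2 : ℝ) : ℝ :=
  A2 * (β2 * ((1 - τ20) * w2 + γ20 * T0 w1 w2 τ10 τ20) / (1 + β2) +
        β1 * ((1 - τ10) * w1 + γ10 * T0 w1 w2 τ10 τ20) / (1 + β1))

/-- Equilibrium date-1 GDP without any intervention:
`Y1* = (β2 w2/(1+β2) + β1 w1/(1+β1))·max(A1, A2)`. -/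
noncomputable def Y1star (w1 w2 β1 β2 A1 A2 : ℝ) : ℝ :=
  (β2 * w2 / (1 + β2) + β1 * w1 / (1 + β1)) * max A1 A2

/-- Proposition 4.4, point 3: a distorted redistribution is
harmful for a low discount factor of the more productive agent: if `γd = 0`,
`τ11 = τ21 = 0`, `A2 > A1`, and the high-saving agent 1 is taxed too heavily,
i.e. `γ10 τ20 w2 − (1−γ10)τ10 w1 < 0`, then (all other parameters held fixed,
with `β1 ∈ (0,1)` fixed) there exists `β̄ ∈ (0,1)` such that for every
`β2 ∈ (0, β̄)` one has `Y1 − Y1* < 0`. -/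
theorem intervention_harmful_for_low_beta2
    (w1 w2 β1 τ10 τ20 γ10 γ20 A1 A2 : ℝ)
    (hw1 : 0 < w1) (hw2 : 0 < w2) (hβ1 : β1 ∈ Set.Ioo (0 : ℝ) 1)
    (hτ10 : τ10 ∈ Set.Ico (0 : ℝ) 1) (hτ20 : τ20 ∈ Set.Ico (0 : ℝ) 1)
    (hγ10 : γ10 ∈ Set.Icc (0 : ℝ) 1) (hγ20 : γ20 ∈ Set.Icc (0 : ℝ) 1)
    (hsum0 : γ10 + γ20 ≤ 1)
    (hA1 : 0 < A1) (hA2 : 0 < A2) (hA : A1 < A2)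
    (hovertax1 : γ10 * τ20 * w2 - (1 - γ10) * τ10 * w1 < 0) :
    ∃ βbar ∈ Set.Ioo (0 : ℝ) 1, ∀ β2 : ℝ, 0 < β2 → β2 < βbar →
      Y1NoTax w1 w2 β1 β2 τ10 τ20 γ10 γ20 A2 - Y1star w1 w2 β1 β2 A1 A2 < 0 := by
  obtain ⟨hβ1pos, hβ1lt⟩ := hβ1
  have h1β1 : (0:ℝ) < 1 + β1 := by linarith
  set T : ℝ := τ10 * w1 + τ20 * w2 with hT
  set c : ℝ := β1 / (1 + β1) * (γ10 * τ20 * w2 - (1 - γ10) * τ10 * w1) with hcdef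
  have hc : c < 0 := mul_neg_of_pos_of_neg (div_pos hβ1pos h1β1) hovertax1
  set x : ℝ := γ20 * T - τ20 * w2 with hx
  set M : ℝ := |x| + 1 with hM
  have hMpos : 0 < M := by positivity
  refine ⟨min (1/2) (-c / M), ⟨lt_min (by norm_num) (div_pos (by linarith) hMpos),
    lt_of_le_of_lt (min_le_left _ _) (by norm_num)⟩, ?_⟩
  intro β2 hβ2 hβ2lt
  have h1β2 : (0:ℝ) < 1 + β2 := by linarith
  have hxM : x ≤ M := by
    have := le_abs_self x
    linarith
  have hfrac : β2 / (1 + β2) ≤ β2 := by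
    rw [div_le_iff₀ h1β2]
    nlinarith
  have hfracpos : 0 < β2 / (1 + β2) := div_pos hβ2 h1β2
  have key : β2 / (1 + β2) * x + c < 0 := by
    have h1 : β2 / (1 + β2) * x ≤ β2 / (1 + β2) * M :=
      mul_le_mul_of_nonneg_left hxM (le_of_lt hfracpos)
    have h2 : β2 / (1 + β2) * M ≤ β2 * M :=
      mul_le_mul_of_nonneg_right hfrac (le_of_lt hMpos)
    have h3 : β2 * M < (-c / M) * M :=
      mul_lt_mul_of_pos_right (lt_of_lt_of_le hβ2lt (min_le_right _ _)) hMpos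
    have h4 : (-c / M) * M = -c := div_mul_cancel₀ _ (ne_of_gt hMpos)
    linarith
  have hmax : max A1 A2 = A2 := max_eq_right (le_of_lt hA)
  have hdiff : Y1NoTax w1 w2 β1 β2 τ10 τ20 γ10 γ20 A2 - Y1star w1 w2 β1 β2 A1 A2
      = A2 * (β2 / (1 + β2) * x + c) := by
    rw [Y1NoTax, Y1star, T0, hmax, hcdef, hx, hT]
    field_simp
    ring
  rw [hdiff]
  exact mul_neg_of_pos_of_neg hA2 key
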